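/- Let q ≥ 2, p ≥ 1 be natural numbers, z an integer, and Q ≥ 1. Then ∫_0^1 |S_Q(α, z)| dα ≤ (6(1 + ln q))^{Q}, where S_Q(α, z) = Σ_{n < q^Q} e^{2πi(αn + (z/p)S(n))} and S(n) is the base-q digit sum of n. -/

import Mathlib

open Complex Finset

/-- `S q n` is the sum of the digits of `n` in base `q`. -/
def digitSum (q n : ℕ) : ℕ := (Nat.digits q n).sum

noncomputable def gfun (q : ℕ) (t : ℝ) : ℂ :=
  ∑ d ∈ Finset.range q, Complex.exp (2 * Real.pi * Complex.I * ((t : ℂ) * d))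

noncomputable def SQ (q p : ℕ) (z : ℤ) (Q : ℕ) (α : ℝ) : ℂ :=
  ∑ n ∈ Finset.range (q ^ Q),
    Complex.exp (2 * Real.pi * Complex.I *
      ((α : ℂ) * n + (z : ℂ) / (p : ℂ) * (digitSum q n : ℂ)))

lemma digitSum_add_mul {q : ℕ} (hq : 2 ≤ q) {d : ℕ} (hd : d < q) (m : ℕ) :
    digitSum q (d + q * m) = d + digitSum q m := by
  rcases Nat.eq_zero_or_pos (d + q * m) with h | h
  · obtain ⟨h1, h2⟩ := Nat.add_eq_zero.mp h
    have hm : m = 0 := by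
      rcases Nat.mul_eq_zero.mp h2 with h' | h' <;> omega
    simp [h1, hm, digitSum]
  · unfold digitSum
    rw [Nat.digits_def' (by omega : 1 < q) h]
    have h1 : (d + q * m) % q = d := by
      rw [Nat.add_mul_mod_self_left, Nat.mod_eq_of_lt hd]
    have h2 : (d + q * m) / q = m := by
      rw [Nat.add_mul_div_left _ _ (by omega : 0 < q), Nat.div_eq_of_lt hd, Nat.zero_add]
    rw [h1, h2, List.sum_cons]

lemma sum_range_mul_eq {M : Type*} [AddCommMonoid M] (N q : ℕ) (f : ℕ → M) :
    ∑ n ∈ Finset.range (q * N), f n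
      = ∑ m ∈ Finset.range N, ∑ d ∈ Finset.range q, f (d + q * m) := by
  rcases Nat.eq_zero_or_pos q with rfl | hq
  · simp
  rw [← Finset.sum_product']
  apply Finset.sum_nbij' (fun n => (n / q, n % q)) (fun pr => pr.2 + q * pr.1)
  · intro n hn
    simp only [Finset.mem_range] at hn
    simp only [Finset.mem_product, Finset.mem_range]
    refine ⟨?_, Nat.mod_lt _ hq⟩
    have := Nat.div_lt_div_of_lt_of_dvd (⟨N, rfl⟩ : q ∣ q * N) hn
    rwa [Nat.mul_div_cancel_left _ hq] at this
  · intro pr hpr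
    simp only [Finset.mem_product, Finset.mem_range] at hpr
    simp only [Finset.mem_range]
    calc pr.2 + q * pr.1 < q + q * pr.1 := by omega
    _ = q * (pr.1 + 1) := by ring
    _ ≤ q * N := Nat.mul_le_mul_left q (by omega)
  · intro n hn
    simpa using Nat.mod_add_div n q
  · intro pr hpr
    simp only [Finset.mem_product, Finset.mem_range] at hpr
    simp [Nat.add_mul_div_left _ _ hq, Nat.div_eq_of_lt hpr.2, Nat.add_mul_mod_self_left,
      Nat.mod_eq_of_lt hpr.2]
  · intro n hn
    simp [Nat.mod_add_div]

lemma SQ_succ {q : ℕ} (hq : 2 ≤ q) (p : ℕ) (z : ℤ) (Q : ℕ) (α : ℝ) :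
    SQ q p z (Q + 1) α = gfun q (α + (z : ℝ) / (p : ℝ)) * SQ q p z Q (q * α) := by
  unfold SQ gfun
  rw [pow_succ, mul_comm (q ^ Q) q, sum_range_mul_eq]
  rw [Finset.sum_mul_sum]
  rw [Finset.sum_comm]
  apply Finset.sum_congr rfl
  intro m hm
  apply Finset.sum_congr rfl
  intro d hd
  simp only [Finset.mem_range] at hd hm
  rw [digitSum_add_mul hq hm d, ← Complex.exp_add]
  congr 1
  push_cast
  ring




lemma norm_exp_two_pi (x : ℝ) : ‖Complex.exp (2 * Real.pi * Complex.I * (x : ℂ))‖ = 1 := by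
  rw [Complex.norm_exp]
  simp

lemma gfun_eq_geom (q : ℕ) (t : ℝ) :
    gfun q t = ∑ d ∈ Finset.range q, Complex.exp (2 * Real.pi * Complex.I * (t : ℂ)) ^ d := by
  unfold gfun
  refine Finset.sum_congr rfl fun d _ => ?_
  rw [← Complex.exp_nat_mul]
  ring_nf

lemma norm_gfun_le (q : ℕ) (t : ℝ) : ‖gfun q t‖ ≤ q := by
  unfold gfun
  calc ‖∑ d ∈ Finset.range q, Complex.exp (2 * Real.pi * Complex.I * ((t : ℂ) * d))‖
      ≤ ∑ d ∈ Finset.range q, ‖Complex.exp (2 * Real.pi * Complex.I * ((t : ℂ) * d))‖ :=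
        norm_sum_le _ _
    _ = ∑ d ∈ Finset.range q, 1 := by
        refine Finset.sum_congr rfl fun d _ => ?_
        have := norm_exp_two_pi (t * d)
        rw [← this]
        norm_cast
    _ = q := by simp

lemma norm_exp_two_pi_sub_one (t : ℝ) :
    ‖Complex.exp (2 * Real.pi * Complex.I * (t : ℂ)) - 1‖ = 2 * |Real.sin (Real.pi * t)| := by
  have h : (2 : ℂ) * Real.pi * Complex.I * (t : ℂ) = ((2 * Real.pi * t : ℝ) : ℂ) * Complex.I := by
    push_cast; ring
  rw [h]
  rw [Complex.norm_def, Complex.normSq_apply]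
  simp only [Complex.sub_re, Complex.sub_im, Complex.exp_ofReal_mul_I_re,
    Complex.exp_ofReal_mul_I_im, Complex.one_re, Complex.one_im]
  have key : (Real.cos (2 * Real.pi * t) - 1) * (Real.cos (2 * Real.pi * t) - 1) +
      (Real.sin (2 * Real.pi * t) - 0) * (Real.sin (2 * Real.pi * t) - 0)
      = (2 * |Real.sin (Real.pi * t)|) ^ 2 := by
    have h1 : Real.cos (2 * (Real.pi * t)) = 1 - 2 * Real.sin (Real.pi * t) ^ 2 :=
      Real.cos_two_mul' (Real.pi * t) ▸ by
        have := Real.sin_sq_add_cos_sq (Real.pi * t); nlinarith [this]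
    have h2 := Real.sin_sq_add_cos_sq (2 * Real.pi * t)
    have h3 : (2 : ℝ) * Real.pi * t = 2 * (Real.pi * t) := by ring
    rw [h3] at h2 ⊢
    rw [h1] at h2 ⊢
    have habs := _root_.sq_abs (Real.sin (Real.pi * t))
    nlinarith [habs, h2]
  rw [key, Real.sqrt_sq (by positivity)]

lemma norm_gfun_le_inv_sin (q : ℕ) {t : ℝ} (h : Real.sin (Real.pi * t) ≠ 0) :
    ‖gfun q t‖ ≤ 1 / |Real.sin (Real.pi * t)| := by
  set w := Complex.exp (2 * Real.pi * Complex.I * (t : ℂ)) with hw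
  have hnorm : ‖w - 1‖ = 2 * |Real.sin (Real.pi * t)| := norm_exp_two_pi_sub_one t
  have hwne : w ≠ 1 := by
    intro he
    rw [he] at hnorm
    simp at hnorm
    exact h hnorm
  have habs : |Real.sin (Real.pi * t)| > 0 := abs_pos.mpr h
  rw [gfun_eq_geom, geom_sum_eq hwne]
  rw [norm_div, hnorm]
  have hwq : ‖w ^ q - 1‖ ≤ 2 := by
    calc ‖w ^ q - 1‖ ≤ ‖w ^ q‖ + ‖(1:ℂ)‖ := norm_sub_le _ _
      _ = ‖w‖ ^ q + 1 := by rw [norm_pow, norm_one]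
      _ = 2 := by
          rw [hw]
          have := norm_exp_two_pi t
          rw [this]
          norm_num
  calc ‖w ^ q - 1‖ / (2 * |Real.sin (Real.pi * t)|) ≤ 2 / (2 * |Real.sin (Real.pi * t)|) := by
        gcongr
    _ = 1 / |Real.sin (Real.pi * t)| := by
        rw [div_eq_div_iff (by positivity) (by positivity)]
        ring




noncomputable def wfun (q j : ℕ) : ℝ := if j = 0 then (q : ℝ) else q / (2 * j)

lemma wfun_nonneg (q j : ℕ) : 0 ≤ wfun q j := by
  unfold wfun; split <;> positivity

lemma two_abs_le_abs_sin (t : ℝ) : 2 * |t - round t| ≤ |Real.sin (Real.pi * t)| := by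
  set u := t - round t with hu
  have h2 : |u| ≤ 1 / 2 := abs_sub_round t
  have ht : t = u + round t := by rw [hu]; ring
  have hsin : |Real.sin (Real.pi * t)| = |Real.sin (Real.pi * u)| := by
    rw [ht, show Real.pi * (u + (round t : ℝ)) = Real.pi * u + (round t : ℝ) * Real.pi by ring,
      Real.sin_add_int_mul_pi, abs_mul]
    have : |((-1 : ℝ)) ^ round t| = 1 := by
      rcases Int.even_or_odd (round t) with he | ho
      · rw [he.neg_one_zpow]; norm_num
      · rw [ho.neg_one_zpow]; norm_num
    rw [this, one_mul]
  rw [hsin]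
  have hsin2 : 0 ≤ Real.sin (Real.pi * |u|) := by
    apply Real.sin_nonneg_of_nonneg_of_le_pi
    · positivity
    · nlinarith [Real.pi_pos, h2, abs_nonneg u]
  have habs : |Real.sin (Real.pi * u)| = Real.sin (Real.pi * |u|) := by
    rcases abs_cases u with ⟨h, _⟩ | ⟨h, hneg⟩
    · rw [h] at hsin2 ⊢
      exact _root_.abs_of_nonneg hsin2
    · rw [h, mul_neg, Real.sin_neg] at hsin2 ⊢
      rw [_root_.abs_of_nonpos (by linarith)]
  rw [habs]
  have := Real.mul_le_sin (x := Real.pi * |u|) (by positivity)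
    (by nlinarith [Real.pi_pos, h2])
  calc 2 * |u| = 2 / Real.pi * (Real.pi * |u|) := by
        field_simp
    _ ≤ Real.sin (Real.pi * |u|) := this

lemma norm_gfun_le_inv_dist (q : ℕ) {t : ℝ} (h : t - round t ≠ 0) :
    ‖gfun q t‖ ≤ 1 / (2 * |t - round t|) := by
  have h1 := two_abs_le_abs_sin t
  have h2 : (0:ℝ) < |t - round t| := abs_pos.mpr h
  have hsin : Real.sin (Real.pi * t) ≠ 0 := by
    intro h0
    rw [h0] at h1
    simp only [abs_zero] at h1
    nlinarith
  calc ‖gfun q t‖ ≤ 1 / |Real.sin (Real.pi * t)| := norm_gfun_le_inv_sin q hsin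
    _ ≤ 1 / (2 * |t - round t|) := by
        apply one_div_le_one_div_of_le (by positivity) h1

lemma term_bound {q : ℕ} (hq : 2 ≤ q) {y : ℝ} (hy0 : 0 ≤ y) (hy1 : y < 1) {j : ℕ} (hj : j < q) :
    ‖gfun q ((y + j) / q)‖ ≤ wfun q j + wfun q (q - 1 - j) := by
  have hq0 : (0:ℝ) < q := by positivity
  by_cases hj0 : j = 0
  · subst hj0
    have hw0 : wfun q 0 = q := by rw [wfun]; simp
    calc ‖gfun q ((y + (0:ℕ)) / q)‖ ≤ q := norm_gfun_le _ _
      _ ≤ wfun q 0 + wfun q (q - 1 - 0) := by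
          rw [hw0]
          have := wfun_nonneg q (q - 1 - 0)
          linarith
  by_cases hjq : j = q - 1
  · have h0 : q - 1 - j = 0 := by omega
    rw [h0]
    calc ‖gfun q ((y + j) / q)‖ ≤ q := norm_gfun_le _ _
      _ ≤ wfun q j + wfun q 0 := by
          have hw0 : wfun q 0 = q := by rw [wfun]; simp
          rw [hw0]
          have := wfun_nonneg q j
          linarith
  -- middle case
  obtain ⟨k, hk⟩ : ∃ k, q = j + k + 1 := ⟨q - 1 - j, by omega⟩
  have hkk : q - 1 - j = k := by omega
  rw [hkk]
  have hj1 : 1 ≤ j := by omega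
  have hk1 : 1 ≤ k := by omega
  set M : ℕ := min j k with hM
  have hM1 : 1 ≤ M := le_min hj1 hk1
  have hMr : (0:ℝ) < M := by exact_mod_cast Nat.lt_of_lt_of_le Nat.zero_lt_one hM1
  set s : ℝ := (y + j) / q with hs
  have hjq' : (j : ℝ) + 1 ≤ q := by
    have : j + 1 ≤ q := by omega
    exact_mod_cast this
  have hs0 : 0 ≤ s := by positivity
  have hs1 : s < 1 := by
    rw [hs, div_lt_one hq0]
    linarith
  have hMj : (M:ℝ) ≤ j := by exact_mod_cast min_le_left j k
  have hMk : (M:ℝ) ≤ k := by exact_mod_cast min_le_right j k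
  have hkr : (k : ℝ) = q - 1 - j := by
    have : (q : ℝ) = j + k + 1 := by exact_mod_cast hk
    linarith
  have hdist : (M:ℝ)/q ≤ |s - round s| := by
    rw [abs_sub_round_eq_min, Int.fract_eq_self.mpr ⟨hs0, hs1⟩]
    apply le_min
    · rw [hs]
      exact div_le_div_of_nonneg_right (by linarith) hq0.le |>.trans_eq rfl
    · have h1s : 1 - s = (q - y - j)/q := by rw [hs]; field_simp; ring
      rw [h1s]
      exact div_le_div_of_nonneg_right (by linarith) hq0.le |>.trans_eq rfl
  have hne : s - round s ≠ 0 := by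
    intro h0
    rw [h0] at hdist
    simp only [abs_zero] at hdist
    have : (0:ℝ) < (M:ℝ)/q := by positivity
    linarith
  have hmain : ‖gfun q s‖ ≤ (q:ℝ) / (2 * M) := by
    calc ‖gfun q s‖ ≤ 1 / (2 * |s - round s|) := norm_gfun_le_inv_dist q hne
      _ ≤ 1 / (2 * ((M:ℝ)/q)) := by
          apply one_div_le_one_div_of_le (by positivity) (by linarith)
      _ = (q:ℝ) / (2 * M) := by
          field_simp
  have hwj : wfun q j = (q:ℝ) / (2 * j) := by rw [wfun, if_neg hj0]
  have hwk : wfun q k = (q:ℝ) / (2 * k) := by rw [wfun, if_neg (by omega)]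
  rw [hwj, hwk]
  rcases min_choice j k with hmc | hmc
  · have : (M:ℝ) = j := by exact_mod_cast hmc
    rw [this] at hmain
    have : (0:ℝ) ≤ (q:ℝ) / (2 * k) := by positivity
    linarith
  · have : (M:ℝ) = k := by exact_mod_cast hmc
    rw [this] at hmain
    have : (0:ℝ) ≤ (q:ℝ) / (2 * j) := by positivity
    linarith

lemma sum_wfun_le {q : ℕ} (hq : 2 ≤ q) :
    ∑ j ∈ Finset.range q, (wfun q j + wfun q (q - 1 - j)) ≤ 3 * q * (1 + Real.log q) := by
  have hq0 : (0:ℝ) < q := by positivity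
  have hlog : 0 ≤ Real.log q := Real.log_nonneg (by exact_mod_cast hq.trans' (by norm_num))
  rw [Finset.sum_add_distrib]
  have hrefl : ∑ j ∈ Finset.range q, wfun q (q - 1 - j) = ∑ j ∈ Finset.range q, wfun q j :=
    Finset.sum_range_reflect (fun j => wfun q j) q
  rw [hrefl]
  have main : ∑ j ∈ Finset.range q, wfun q j ≤ q + q / 2 * (1 + Real.log q) := by
    obtain ⟨r, hr⟩ : ∃ r, q = r + 1 := ⟨q - 1, by omega⟩
    have hr1 : 1 ≤ r := by omega
    have e := Finset.sum_range_succ' (fun j => wfun q j) r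
    rw [← hr] at e
    rw [e]
    have h0 : wfun q 0 = q := by rw [wfun, if_pos rfl]
    have hterm : ∀ i, wfun q (i + 1) = q / 2 * ((i:ℝ) + 1)⁻¹ := by
      intro i
      rw [wfun, if_neg (Nat.succ_ne_zero i)]
      push_cast
      field_simp
    have hsum : ∑ i ∈ Finset.range r, wfun q (i + 1)
        = q / 2 * ∑ i ∈ Finset.range r, ((i:ℝ) + 1)⁻¹ := by
      rw [Finset.mul_sum]
      exact Finset.sum_congr rfl fun i _ => hterm i
    have hharm : ∑ i ∈ Finset.range r, ((i:ℝ) + 1)⁻¹ = (harmonic r : ℝ) := by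
      rw [harmonic]
      push_cast
      rfl
    have hbound : (harmonic r : ℝ) ≤ 1 + Real.log q := by
      calc (harmonic r : ℝ) ≤ 1 + Real.log r := harmonic_le_one_add_log r
        _ ≤ 1 + Real.log q := by
            have : Real.log r ≤ Real.log q := by
              apply Real.log_le_log (by exact_mod_cast hr1)
              exact_mod_cast (by omega : r ≤ q)
            linarith
    rw [h0, hsum, hharm]
    have hq2 : (0:ℝ) ≤ (q:ℝ)/2 := by positivity
    nlinarith [mul_le_mul_of_nonneg_left hbound hq2]
  nlinarith [main]
noncomputable def Phi (q : ℕ) (β : ℝ) : ℝ := ∑ k ∈ Finset.range q, ‖gfun q (β + k / q)‖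

lemma gfun_periodic (q : ℕ) : Function.Periodic (gfun q) 1 := by
  intro t
  unfold gfun
  refine Finset.sum_congr rfl fun d _ => ?_
  have h : (2:ℂ) * Real.pi * Complex.I * (((t + 1 : ℝ) : ℂ) * d)
      = 2 * Real.pi * Complex.I * ((t:ℂ) * d) + d * (2 * Real.pi * Complex.I) := by
    push_cast; ring
  rw [h, Complex.exp_add, Complex.exp_nat_mul_two_pi_mul_I, mul_one]

lemma continuous_gfun (q : ℕ) : Continuous (gfun q) := by
  unfold gfun
  apply continuous_finset_sum
  intro d _
  apply Continuous.cexp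
  exact continuous_const.mul (Complex.continuous_ofReal.mul continuous_const)

lemma Phi_add_inv {q : ℕ} (hq : q ≠ 0) (β : ℝ) : Phi q (β + 1 / q) = Phi q β := by
  unfold Phi
  set F : ℕ → ℝ := fun k => ‖gfun q (β + k / q)‖ with hF
  have h1 : ∑ k ∈ Finset.range q, ‖gfun q (β + 1 / q + k / q)‖
      = ∑ k ∈ Finset.range q, F (k + 1) := by
    refine Finset.sum_congr rfl fun k _ => ?_
    have : β + 1 / q + (k : ℝ) / q = β + ((k : ℝ) + 1) / q := by ring
    rw [hF]
    simp only
    rw [this]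
    norm_num
  have e1 := Finset.sum_range_succ F q
  have e2 := Finset.sum_range_succ' F q
  have hFq : F q = F 0 := by
    rw [hF]
    simp only
    rw [div_self (by exact_mod_cast hq), Nat.cast_zero, zero_div, add_zero]
    rw [gfun_periodic q β]
  rw [h1]
  rw [e1] at e2
  rw [hFq] at e2
  linarith

lemma Phi_add_int {q : ℕ} (hq : q ≠ 0) (β : ℝ) (n : ℤ) : Phi q (β + n / q) = Phi q β := by
  induction n using Int.induction_on with
  | zero => simp
  | succ n ih =>
      have h : β + ((n : ℝ) + 1) / (q:ℝ) = β + (n : ℝ) / (q:ℝ) + 1 / q := by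
        ring
      push_cast
      rw [h, Phi_add_inv hq]
      push_cast at ih
      exact ih
  | pred n ih =>
      have h : β + (-(n : ℝ) - 1) / (q:ℝ) + 1 / q = β + (-(n : ℝ)) / (q:ℝ) := by
        ring
      have h2 := Phi_add_inv hq (β + (-(n : ℝ) - 1) / (q:ℝ))
      rw [h] at h2
      push_cast
      push_cast at ih
      rw [← h2]
      exact ih

lemma Phi_le_bound {q : ℕ} (hq : 2 ≤ q) (β : ℝ) : Phi q β ≤ 3 * q * (1 + Real.log q) := by
  have hqne : (q:ℝ) ≠ 0 := by positivity
  set y : ℝ := Int.fract ((q:ℝ) * β) with hy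
  have hfr : β = y / q + (⌊(q:ℝ) * β⌋ : ℝ) / q := by
    rw [hy, Int.fract]
    field_simp
    ring
  have step1 : Phi q β = Phi q (y / q) := by
    conv_lhs => rw [hfr]
    exact Phi_add_int (by omega) (y / q) ⌊(q:ℝ) * β⌋
  rw [step1]
  unfold Phi
  calc ∑ k ∈ Finset.range q, ‖gfun q (y / q + k / q)‖
      ≤ ∑ k ∈ Finset.range q, (wfun q k + wfun q (q - 1 - k)) := by
        apply Finset.sum_le_sum
        intro k hk
        rw [← add_div]
        exact term_bound hq (Int.fract_nonneg _) (Int.fract_lt_one _) (Finset.mem_range.mp hk)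
    _ ≤ 3 * q * (1 + Real.log q) := sum_wfun_le hq
lemma SQ_periodic (q p : ℕ) (z : ℤ) (Q : ℕ) : Function.Periodic (SQ q p z Q) 1 := by
  intro α
  unfold SQ
  refine Finset.sum_congr rfl fun n _ => ?_
  have h : 2 * (Real.pi:ℂ) * Complex.I *
        (((α + 1 : ℝ) : ℂ) * n + (z:ℂ)/(p:ℂ) * (digitSum q n : ℂ))
      = 2 * Real.pi * Complex.I * ((α:ℂ) * n + (z:ℂ)/(p:ℂ) * (digitSum q n : ℂ))
        + n * (2 * Real.pi * Complex.I) := by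
    push_cast; ring
  rw [h, Complex.exp_add, Complex.exp_nat_mul_two_pi_mul_I, mul_one]

lemma continuous_SQ (q p : ℕ) (z : ℤ) (Q : ℕ) : Continuous (SQ q p z Q) := by
  unfold SQ
  apply continuous_finset_sum
  intro n _
  apply Continuous.cexp
  apply continuous_const.mul
  exact (Complex.continuous_ofReal.mul continuous_const).add continuous_const

lemma SQ_add_nat (q p : ℕ) (z : ℤ) (Q : ℕ) (β : ℝ) (k : ℕ) :
    SQ q p z Q (β + k) = SQ q p z Q β := by
  have h := ((SQ_periodic q p z Q).nat_mul k) β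
  simpa using h

lemma integral_rec (q p : ℕ) (z : ℤ) (Q : ℕ) (hq : 2 ≤ q) :
    (∫ α in (0:ℝ)..1, ‖SQ q p z (Q+1) α‖)
      ≤ 3 * (1 + Real.log q) * ∫ α in (0:ℝ)..1, ‖SQ q p z Q α‖ := by
  have hq0 : (0:ℝ) < q := by positivity
  have hqne : (q:ℝ) ≠ 0 := ne_of_gt hq0
  set c : ℝ := (z:ℝ)/(p:ℝ) with hc
  set h : ℝ → ℝ := fun β => ‖SQ q p z Q β‖ with hh
  have hcont : Continuous h := (continuous_SQ q p z Q).norm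
  have hnonneg : ∀ β, 0 ≤ h β := fun β => norm_nonneg _
  set G : ℝ → ℝ := fun α => ‖gfun q (α + c)‖ * h (q * α) with hG
  have hGcont : Continuous G :=
    (((continuous_gfun q).comp (continuous_id.add continuous_const)).norm).mul
      (hcont.comp (continuous_const.mul continuous_id))
  have hGeq : ∀ α : ℝ, ‖SQ q p z (Q+1) α‖ = G α := by
    intro α
    rw [hG]
    simp only
    rw [SQ_succ hq p z Q α, norm_mul, hh]
  have step0 : (∫ α in (0:ℝ)..1, ‖SQ q p z (Q+1) α‖) = ∫ α in (0:ℝ)..1, G α :=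
    intervalIntegral.integral_congr (fun α _ => hGeq α)
  rw [step0]
  set a : ℕ → ℝ := fun k => k / q with ha
  have hint : ∀ k, k < q → IntervalIntegrable G MeasureTheory.volume (a k) (a (k+1)) :=
    fun k _ => hGcont.intervalIntegrable _ _
  have hadj := intervalIntegral.sum_integral_adjacent_intervals hint
  have ha0 : a 0 = 0 := by simp [ha]
  have haq : a q = 1 := by rw [ha]; exact div_self hqne
  rw [ha0, haq] at hadj
  rw [← hadj]
  -- rewrite each summand
  have step2 : ∀ k, k < q →
      (∫ x in a k..a (k+1), G x) = ∫ x in (0:ℝ)..1/q, ‖gfun q (x + c + k/q)‖ * h (q * x) := by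
    intro k hk
    have hcomp := intervalIntegral.integral_comp_add_right G ((k:ℝ)/q)
      (a := (0:ℝ)) (b := 1/q)
    have hb : (0:ℝ) + k/q = a k := by rw [ha]; ring
    have hb2 : 1/q + (k:ℝ)/q = a (k+1) := by rw [ha]; push_cast; field_simp; ring
    rw [hb, hb2] at hcomp
    rw [← hcomp]
    apply intervalIntegral.integral_congr
    intro x _
    rw [hG]
    simp only
    have harg : (q:ℝ) * (x + k/q) = q * x + k := by field_simp
    rw [harg, hh]
    simp only
    rw [SQ_add_nat]
    ring_nf
  rw [Finset.sum_congr rfl (fun k hk => step2 k (Finset.mem_range.mp hk))]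
  -- swap sum and integral
  have hswap : ∑ k ∈ Finset.range q, (∫ x in (0:ℝ)..1/q, ‖gfun q (x + c + k/q)‖ * h (q * x))
      = ∫ x in (0:ℝ)..1/q, ∑ k ∈ Finset.range q, ‖gfun q (x + c + k/q)‖ * h (q * x) := by
    rw [intervalIntegral.integral_finset_sum]
    intro k _
    apply Continuous.intervalIntegrable
    exact (((continuous_gfun q).comp (by continuity)).norm).mul
      (hcont.comp (continuous_const.mul continuous_id))
  rw [hswap]
  -- pointwise bound
  have hbound : ∀ x ∈ Set.Icc (0:ℝ) (1/q),
      (∑ k ∈ Finset.range q, ‖gfun q (x + c + k/q)‖ * h (q * x))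
        ≤ 3 * q * (1 + Real.log q) * h (q * x) := by
    intro x _
    rw [← Finset.sum_mul]
    apply mul_le_mul_of_nonneg_right ?_ (hnonneg _)
    have : ∑ k ∈ Finset.range q, ‖gfun q (x + c + k/q)‖ = Phi q (x + c) := by
      unfold Phi
      exact Finset.sum_congr rfl fun k _ => by ring_nf
    rw [this]
    exact Phi_le_bound hq (x + c)
  have hmono : (∫ x in (0:ℝ)..1/q, ∑ k ∈ Finset.range q, ‖gfun q (x + c + k/q)‖ * h (q * x))
      ≤ ∫ x in (0:ℝ)..1/q, 3 * q * (1 + Real.log q) * h (q * x) := by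
    apply intervalIntegral.integral_mono_on (by positivity) ?_ ?_ hbound
    · apply Continuous.intervalIntegrable
      apply continuous_finset_sum
      intro k _
      exact (((continuous_gfun q).comp (by continuity)).norm).mul
        (hcont.comp (continuous_const.mul continuous_id))
    · apply Continuous.intervalIntegrable
      exact continuous_const.mul (hcont.comp (continuous_const.mul continuous_id))
  refine hmono.trans ?_
  rw [intervalIntegral.integral_const_mul]
  have hchg : (∫ x in (0:ℝ)..1/q, h (q * x)) = (q:ℝ)⁻¹ * ∫ x in (0:ℝ)..1, h x := by
    have := intervalIntegral.integral_comp_mul_left h (a := (0:ℝ)) (b := 1/q) hqne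
    rw [this]
    rw [mul_zero, mul_one_div, div_self hqne]
    simp [smul_eq_mul]
  rw [hchg]
  have hFnonneg : 0 ≤ ∫ x in (0:ℝ)..1, h x :=
    intervalIntegral.integral_nonneg (by norm_num) (fun x _ => hnonneg x)
  have : 3 * (q:ℝ) * (1 + Real.log q) * ((q:ℝ)⁻¹ * ∫ x in (0:ℝ)..1, h x)
      = 3 * (1 + Real.log q) * ∫ x in (0:ℝ)..1, h x := by
    field_simp
  rw [this]
theorem integral_abs_SQ_le (q p Q : ℕ) (hq : 2 ≤ q) (hp : 1 ≤ p) (hQ : 1 ≤ Q) (z : ℤ) :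
    (∫ α in (0:ℝ)..1,
        ‖∑ n ∈ Finset.range (q ^ Q),
            Complex.exp (2 * Real.pi * Complex.I *
              ((α : ℂ) * n + (z : ℂ) / (p : ℂ) * (digitSum q n : ℂ)))‖) ≤
      (6 * (1 + Real.log q)) ^ Q := by
  have hlog : 0 ≤ Real.log q := Real.log_nonneg (by exact_mod_cast Nat.one_le_of_lt hq)
  have key : ∀ n : ℕ, (∫ α in (0:ℝ)..1, ‖SQ q p z n α‖) ≤ (6 * (1 + Real.log q)) ^ n := by
    intro n
    induction n with
    | zero =>
        have h1 : ∀ α : ℝ, SQ q p z 0 α = 1 := by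
          intro α
          unfold SQ
          rw [pow_zero]
          simp [digitSum]
        have : (∫ α in (0:ℝ)..1, ‖SQ q p z 0 α‖) = ∫ α in (0:ℝ)..1, (1:ℝ) :=
          intervalIntegral.integral_congr (fun α _ => by rw [h1 α]; simp)
        rw [this]
        simp
    | succ n ih =>
        have h1 := integral_rec q p z n hq
        have h2 : (0:ℝ) ≤ 3 * (1 + Real.log q) := by positivity
        have h3 : (0:ℝ) ≤ (6 * (1 + Real.log q)) ^ n := by positivity
        calc (∫ α in (0:ℝ)..1, ‖SQ q p z (n+1) α‖)
            ≤ 3 * (1 + Real.log q) * ∫ α in (0:ℝ)..1, ‖SQ q p z n α‖ := h1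
          _ ≤ 3 * (1 + Real.log q) * (6 * (1 + Real.log q)) ^ n :=
              mul_le_mul_of_nonneg_left ih h2
          _ ≤ 6 * (1 + Real.log q) * (6 * (1 + Real.log q)) ^ n := by nlinarith
          _ = (6 * (1 + Real.log q)) ^ (n + 1) := by rw [pow_succ]; ring
  exact key Q
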